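/- arXiv:1610.09631 — 2 statements merged into one kernel-verified Lean document; each statement's English description precedes it below -/
import Mathlib

section
/- Let n ≥ 2 be an even integer, and let a, b, σ, ρ be reals with a > 0, σ > 0, and ρ/σ ≤ (n+2)/2 ≤ b/a. Fix t ∈ [0, a/σ) and set a(t) = a - σt, b(t) = b - ρt. Let l be an integer with 0 ≤ l ≤ (n-2)/2, and let k be an integer such that the number D := k(b(t) - a(t)) - l·b(t) is strictly positive. Then k ≥ l + 1 and moreover D ≥ a(t). -/
/-- Area estimate excluding Maslov index `-2l` disks: with `a > 0`, `σ > 0`,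
`ρ/σ ≤ (n+2)/2 ≤ b/a` (`n ≥ 2` even), `t ∈ [0, a/σ)`, `a(t) = a - σt`,
`b(t) = b - ρt`, `0 ≤ l ≤ (n-2)/2`, and `k` an integer with
`D = k(b(t) - a(t)) - l·b(t) > 0`, one has `k ≥ l + 1` and `D ≥ a(t)`. -/
theorem stmt3 (n : ℕ) (hn_even : Even n) (hn : 2 ≤ n)
    (a b σ ρ : ℝ) (ha : 0 < a) (hσ : 0 < σ)
    (h1 : ρ / σ ≤ ((n : ℝ) + 2) / 2) (h2 : ((n : ℝ) + 2) / 2 ≤ b / a)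
    (t : ℝ) (ht0 : 0 ≤ t) (ht1 : t < a / σ)
    (l k : ℤ) (hl0 : 0 ≤ l) (hl1 : (l : ℝ) ≤ ((n : ℝ) - 2) / 2)
    (hD : 0 < (k : ℝ) * ((b - ρ * t) - (a - σ * t)) - (l : ℝ) * (b - ρ * t)) :
    l + 1 ≤ k ∧
      a - σ * t ≤ (k : ℝ) * ((b - ρ * t) - (a - σ * t)) - (l : ℝ) * (b - ρ * t) := by
  have hn2 : (2 : ℝ) ≤ (n : ℝ) := by exact_mod_cast hn
  have hA : 0 < a - σ * t := by
    have := (lt_div_iff₀ hσ).mp ht1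
    nlinarith
  have hb : (((n : ℝ) + 2) / 2) * a ≤ b := (le_div_iff₀ ha).mp h2
  have hρ : ρ ≤ σ * (((n : ℝ) + 2) / 2) := by
    have := (div_le_iff₀ hσ).mp h1
    linarith
  have hB : (((n : ℝ) + 2) / 2) * (a - σ * t) ≤ b - ρ * t := by
    nlinarith [mul_le_mul_of_nonneg_right hρ ht0]
  have hBA : a - σ * t ≤ (b - ρ * t) - (a - σ * t) := by nlinarith
  have hl0' : (0 : ℝ) ≤ (l : ℝ) := by exact_mod_cast hl0
  have hk : l + 1 ≤ k := by
    by_contra h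
    push_neg at h
    have hkl : (k : ℝ) ≤ (l : ℝ) := by exact_mod_cast Int.lt_add_one_iff.mp h
    nlinarith
  have hk' : (l : ℝ) + 1 ≤ (k : ℝ) := by exact_mod_cast hk
  refine ⟨hk, ?_⟩
  nlinarith
end

section
/- Let (M, ω) be a symplectic manifold of dimension 2n and let F, G : M → ℝ be smooth functions. Then dF ∧ dG ∧ ω^{n-1} = -(1/n)·{F, G}·ωⁿ, where {F,G} is the Poisson bracket defined by {F,G} = ω(sgrad G, sgrad F) with i_{sgrad H} ω = -dH. Consequently, for the 2-form ω_t := ω + t·dF ∧ dG one has ω_tⁿ = (1 - t{F,G})·ωⁿ; in particular ω_t is nondegenerate at every point where t·{F,G} < 1. -/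
open ExteriorAlgebra


lemma stmt6_aux_pow {A : Type*} [Ring A] (x y : A) (h : Commute x y) (hy : y * y = 0) :
    ∀ m : ℕ, (x + y) ^ (m + 1) = x ^ (m + 1) + (m + 1) • (y * x ^ m)
  | 0 => by simp
  | (m + 1) => by
    have hyx : ∀ k : ℕ, x ^ k * y = y * x ^ k := fun k => (h.pow_left k).eq
    have h0 : y * x ^ m * y = 0 := by
      rw [mul_assoc, hyx m, ← mul_assoc, hy, zero_mul]
    rw [pow_succ, stmt6_aux_pow x y h hy m, add_mul, mul_add, mul_add, smul_mul_assoc,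
      smul_mul_assoc, ← pow_succ, mul_assoc y (x ^ m) x, ← pow_succ, h0, smul_zero, add_zero,
      hyx (m + 1), succ_nsmul' (y * x ^ (m + 1)) (m + 1)]
    abel

lemma stmt6_sum_pow {ι : Type*} [DecidableEq ι] {A : Type*} [Ring A] (w : ι → A)
    (hc : ∀ i j, Commute (w i) (w j)) (hsq : ∀ i, w i * w i = 0) (s : Finset ι) :
    ∀ k : ℕ, (∑ i ∈ s, w i) ^ k =
      k.factorial • ∑ T ∈ s.powersetCard k, T.noncommProd w (fun i _ j _ _ => hc i j) := by
  classical
  induction s using Finset.induction_on with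
  | empty =>
    intro k
    cases k with
    | zero => simp; exact (Finset.noncommProd_empty _ _).symm
    | succ k =>
      rw [Finset.powersetCard_eq_empty.mpr (by simp)]
      simp [zero_pow]
  | @insert j s hj ih =>
    intro k
    cases k with
    | zero => simp; exact (Finset.noncommProd_empty _ _).symm
    | succ m =>
      have hcomm : Commute (∑ i ∈ s, w i) (w j) :=
        (Commute.sum_left _ _ _ fun i _ => hc i j)
      have hsum : ∑ i ∈ insert j s, w i = (∑ i ∈ s, w i) + w j := by
        rw [Finset.sum_insert hj, add_comm]
      rw [hsum, stmt6_aux_pow _ _ hcomm (hsq j) m, ih (m + 1), ih m,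
        Finset.powersetCard_succ_insert hj, Finset.sum_union]
      · rw [Finset.sum_image (fun T hT U hU hTU => by
          have hTs := (Finset.mem_powersetCard.mp hT).1
          have hUs := (Finset.mem_powersetCard.mp hU).1
          have hjT : j ∉ T := fun h => hj (hTs h)
          have hjU : j ∉ U := fun h => hj (hUs h)
          rw [← Finset.erase_insert hjT, hTU, Finset.erase_insert hjU])]
        have himg : ∀ T ∈ s.powersetCard m,
            (insert j T).noncommProd w (fun i _ k _ _ => hc i k) =
              w j * T.noncommProd w (fun i _ k _ _ => hc i k) := by
          intro T hT
          exact Finset.noncommProd_insert_of_notMem _ _ _ _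
            (fun h => hj ((Finset.mem_powersetCard.mp hT).1 h))
        rw [Finset.sum_congr rfl himg, ← Finset.mul_sum, smul_add, mul_smul_comm,
          smul_smul, ← Nat.factorial_succ]
      · rw [Finset.disjoint_left]
        intro T hT hT'
        obtain ⟨U, hU, rfl⟩ := Finset.mem_image.mp hT'
        exact hj ((Finset.mem_powersetCard.mp hT).1 (Finset.mem_insert_self j U))

section ExtAux

variable {W : Type*} [AddCommGroup W] [Module ℝ W]

lemma stmt6_anti (x y : W) : ι ℝ y * ι ℝ x = -(ι ℝ x * ι ℝ y) :=
  eq_neg_of_add_eq_zero_left (ι_add_mul_swap y x)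

lemma stmt6_pair_comm (u v x : W) : Commute (ι ℝ u * ι ℝ v) (ι ℝ x) := by
  show _ * _ = _ * _
  rw [mul_assoc, stmt6_anti x v, mul_neg, ← mul_assoc, stmt6_anti x u, neg_mul, neg_neg,
    mul_assoc]

lemma stmt6_pair_sq (u v : W) : (ι ℝ u * ι ℝ v) * (ι ℝ u * ι ℝ v) = 0 := by
  have h : (ι ℝ u * ι ℝ v) * (ι ℝ u * ι ℝ v) = ι ℝ u * ((ι ℝ v * ι ℝ u) * ι ℝ v) := by
    rw [mul_assoc, mul_assoc]
  rw [h, stmt6_anti u v, neg_mul, mul_neg, mul_assoc, ι_sq_zero, mul_zero, mul_zero, neg_zero]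

lemma stmt6_kill (u v : W) (α β : ℝ) (X : ExteriorAlgebra ℝ W) :
    (α • ι ℝ u + β • ι ℝ v) * ((ι ℝ u * ι ℝ v) * X) = 0 := by
  have h1 : ι ℝ u * ((ι ℝ u * ι ℝ v) * X) = 0 := by
    rw [← mul_assoc, ← mul_assoc, ι_sq_zero, zero_mul, zero_mul]
  have h2 : ι ℝ v * ((ι ℝ u * ι ℝ v) * X) = 0 := by
    rw [← mul_assoc, ← mul_assoc, stmt6_anti u v, neg_mul, neg_mul, mul_assoc (ι ℝ u),
      ι_sq_zero, mul_zero, zero_mul, neg_zero]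
  rw [add_mul, smul_mul_assoc, smul_mul_assoc, h1, h2, smul_zero, smul_zero, add_zero]

end ExtAux

set_option maxHeartbeats 2000000 in
/-- Pointwise version of `dF ∧ dG ∧ ω^{n-1} = -(1/n)·{F,G}·ωⁿ` in Darboux
coordinates: in the exterior algebra of the space `W` of covectors at a point of
a `2n`-dimensional symplectic manifold, with `ω = Σ dpᵢ ∧ dqᵢ`,
`dF = Σ aᵢ dpᵢ + bᵢ dqᵢ`, `dG = Σ cᵢ dpᵢ + dᵢ dqᵢ`, and Poisson bracket
`{F,G} = dF(sgrad G) = Σ (bᵢcᵢ - aᵢdᵢ)` (convention `i_{sgrad H} ω = -dH`),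
one has `dF ∧ dG ∧ ω^{n-1} = -(1/n)·{F,G}·ωⁿ`; consequently, for
`ω_t = ω + t·dF ∧ dG`, `ω_tⁿ = (1 - t·{F,G})·ωⁿ`, which is nonzero (i.e. `ω_t`
is nondegenerate) wherever `t·{F,G} < 1`, provided `ωⁿ ≠ 0`. -/
theorem stmt6 (n : ℕ) (hn : 0 < n) (W : Type*) [AddCommGroup W] [Module ℝ W]
    (e f : Fin n → W) (a b c d : Fin n → ℝ) (t : ℝ)
    (ω dF dG : ExteriorAlgebra ℝ W) (pb : ℝ)
    (hω : ω = ∑ i, ι ℝ (e i) * ι ℝ (f i))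
    (hdF : dF = ∑ i, (a i • ι ℝ (e i) + b i • ι ℝ (f i)))
    (hdG : dG = ∑ i, (c i • ι ℝ (e i) + d i • ι ℝ (f i)))
    (hpb : pb = ∑ i, (b i * c i - a i * d i)) :
    dF * dG * ω ^ (n - 1) = (-(1 / (n : ℝ)) * pb) • ω ^ n ∧
    (ω + t • (dF * dG)) ^ n = (1 - t * pb) • ω ^ n ∧
    (t * pb < 1 → ω ^ n ≠ 0 → (ω + t • (dF * dG)) ^ n ≠ 0) := by
  classical
  have hn0 : (n : ℝ) ≠ 0 := Nat.cast_ne_zero.mpr hn.ne'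
  set w : Fin n → ExteriorAlgebra ℝ W := fun i => ι ℝ (e i) * ι ℝ (f i) with hwdef
  have hc : ∀ i j, Commute (w i) (w j) := fun i j =>
    ((stmt6_pair_comm (e i) (f i) (e j)).mul_right (stmt6_pair_comm (e i) (f i) (f j)))
  have hsq : ∀ i, w i * w i = 0 := fun i => stmt6_pair_sq (e i) (f i)
  have hω' : ω = ∑ i, w i := hω
  set P : ExteriorAlgebra ℝ W :=
    Finset.univ.noncommProd w (fun i _ j _ _ => hc i j) with hPdef
  have hcard : (Finset.univ : Finset (Fin n)).card = n := by simp
  -- ω^n = n! • P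
  have hωn : ω ^ n = n.factorial • P := by
    rw [hω', stmt6_sum_pow w hc hsq Finset.univ n]
    congr 1
    have h1 := Finset.powersetCard_self (Finset.univ : Finset (Fin n))
    rw [hcard] at h1
    rw [h1, Finset.sum_singleton]
  -- vF, vG : dF and dG are images of ι
  have hvF : ι ℝ (∑ i, (a i • e i + b i • f i)) = dF := by
    rw [hdF, map_sum]; exact Finset.sum_congr rfl (fun i _ => by rw [map_add, map_smul, map_smul])
  have hvG : ι ℝ (∑ i, (c i • e i + d i • f i)) = dG := by
    rw [hdG, map_sum]; exact Finset.sum_congr rfl (fun i _ => by rw [map_add, map_smul, map_smul])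
  -- the key pointwise computation
  have key : ∀ m : Fin n,
      dF * dG * ((Finset.univ.erase m).noncommProd w (fun i _ j _ _ => hc i j)) =
        (a m * d m - b m * c m) • P := by
    intro m
    set T : Finset (Fin n) := Finset.univ.erase m with hT
    set X : ExteriorAlgebra ℝ W := T.noncommProd w (fun i _ j _ _ => hc i j) with hX
    have hmT : m ∉ T := Finset.notMem_erase _ _
    have hins : insert m T = Finset.univ := Finset.insert_erase (Finset.mem_univ m)
    have hwX : w m * X = P := by
      rw [← Finset.noncommProd_insert_of_notMem T m w (fun i _ j _ _ => hc i j) hmT]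
      exact Finset.noncommProd_congr hins (fun _ _ => rfl) _
    have hkill : ∀ i ∈ T, ∀ α β : ℝ, (α • ι ℝ (e i) + β • ι ℝ (f i)) * X = 0 := by
      intro i hi α β
      have hX' : X = w i * (T.erase i).noncommProd w (fun i _ j _ _ => hc i j) := by
        rw [← Finset.noncommProd_insert_of_notMem (T.erase i) i w
          (fun i _ j _ _ => hc i j) (Finset.notMem_erase _ _)]
        exact (Finset.noncommProd_congr (Finset.insert_erase hi) (fun _ _ => rfl) _).symm
      rw [hX']
      exact stmt6_kill (e i) (f i) α β _
    have hXcomm : ∀ x : W, Commute (ι ℝ x) X :=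
      fun x => Finset.noncommProd_commute _ _ _ _ (fun k _ => (stmt6_pair_comm (e k) (f k) x).symm)
    have hGX : dG * X = (c m • ι ℝ (e m) + d m • ι ℝ (f m)) * X := by
      rw [hdG, Finset.sum_mul]
      refine Finset.sum_eq_single_of_mem m (Finset.mem_univ m) (fun j _ hj => ?_)
      exact hkill j (Finset.mem_erase.mpr ⟨hj, Finset.mem_univ j⟩) _ _
    have hFX : dF * X = (a m • ι ℝ (e m) + b m • ι ℝ (f m)) * X := by
      rw [hdF, Finset.sum_mul]
      refine Finset.sum_eq_single_of_mem m (Finset.mem_univ m) (fun j _ hj => ?_)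
      exact hkill j (Finset.mem_erase.mpr ⟨hj, Finset.mem_univ j⟩) _ _
    have hcommG : Commute (c m • ι ℝ (e m) + d m • ι ℝ (f m)) X :=
      Commute.add_left ((hXcomm (e m)).smul_left _) ((hXcomm (f m)).smul_left _)
    have hgh : (a m • ι ℝ (e m) + b m • ι ℝ (f m)) * (c m • ι ℝ (e m) + d m • ι ℝ (f m)) =
        (a m * d m - b m * c m) • w m := by
      rw [hwdef]
      rw [add_mul, mul_add, mul_add, smul_mul_smul_comm, smul_mul_smul_comm,
        smul_mul_smul_comm, smul_mul_smul_comm, ι_sq_zero (R := ℝ) (e m),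
        ι_sq_zero (R := ℝ) (f m), smul_zero, smul_zero, zero_add, add_zero,
        stmt6_anti (e m) (f m), smul_neg, sub_smul]
      abel
    calc dF * dG * X = dF * (dG * X) := by rw [mul_assoc]
      _ = dF * (X * (c m • ι ℝ (e m) + d m • ι ℝ (f m))) := by rw [hGX, hcommG.eq]
      _ = (dF * X) * (c m • ι ℝ (e m) + d m • ι ℝ (f m)) := by rw [mul_assoc]
      _ = ((a m • ι ℝ (e m) + b m • ι ℝ (f m)) * X) * (c m • ι ℝ (e m) + d m • ι ℝ (f m)) := by
          rw [hFX]
      _ = (a m • ι ℝ (e m) + b m • ι ℝ (f m)) * (X * (c m • ι ℝ (e m) + d m • ι ℝ (f m))) := by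
          rw [mul_assoc]
      _ = (a m • ι ℝ (e m) + b m • ι ℝ (f m)) * ((c m • ι ℝ (e m) + d m • ι ℝ (f m)) * X) := by
          rw [hcommG.eq]
      _ = ((a m • ι ℝ (e m) + b m • ι ℝ (f m)) * (c m • ι ℝ (e m) + d m • ι ℝ (f m))) * X := by
          rw [mul_assoc]
      _ = ((a m * d m - b m * c m) • w m) * X := by rw [hgh]
      _ = (a m * d m - b m * c m) • (w m * X) := by rw [smul_mul_assoc]
      _ = (a m * d m - b m * c m) • P := by rw [hwX]
  -- the (n-1)-subsets are exactly complements of points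
  have himg : Finset.powersetCard (n - 1) (Finset.univ : Finset (Fin n)) =
      Finset.univ.image (fun m : Fin n => Finset.univ.erase m) := by
    ext T
    simp only [Finset.mem_powersetCard, Finset.mem_image, Finset.mem_univ, true_and]
    constructor
    · rintro ⟨hTs, hTc⟩
      have hTne : ∃ m : Fin n, m ∉ T := by
        by_contra h
        push_neg at h
        have hTu : T = Finset.univ := Finset.eq_univ_of_forall h
        rw [hTu, hcard] at hTc
        omega
      obtain ⟨m, hm⟩ := hTne
      refine ⟨m, ?_⟩
      refine (Finset.eq_of_subset_of_card_le (Finset.subset_erase.mpr ⟨hTs, hm⟩) ?_).symm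
      rw [Finset.card_erase_of_mem (Finset.mem_univ m), hcard, hTc]
    · rintro ⟨m, rfl⟩
      exact ⟨Finset.erase_subset _ _, by
        rw [Finset.card_erase_of_mem (Finset.mem_univ m), hcard]⟩
  have hinj : ∀ x ∈ (Finset.univ : Finset (Fin n)), ∀ y ∈ (Finset.univ : Finset (Fin n)),
      Finset.univ.erase x = Finset.univ.erase y → x = y := by
    intro x _ y _ hxy
    by_contra hne
    have hx : x ∈ Finset.univ.erase y := Finset.mem_erase.mpr ⟨hne, Finset.mem_univ x⟩
    rw [← hxy] at hx
    exact (Finset.mem_erase.mp hx).1 rfl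
  have hS : pb = -∑ m, (a m * d m - b m * c m) := by
    have h0 : (∑ i, (b i * c i - a i * d i)) + (∑ m, (a m * d m - b m * c m)) = 0 := by
      rw [← Finset.sum_add_distrib]
      exact Finset.sum_eq_zero fun i _ => by ring
    rw [hpb]
    linarith
  -- Part 1
  have part1 : dF * dG * ω ^ (n - 1) = (-(1 / (n : ℝ)) * pb) • ω ^ n := by
    have hsum1 : ∑ T ∈ Finset.powersetCard (n - 1) (Finset.univ : Finset (Fin n)),
        T.noncommProd w (fun i _ j _ _ => hc i j) =
        ∑ m : Fin n, (Finset.univ.erase m).noncommProd w (fun i _ j _ _ => hc i j) := by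
      rw [himg, Finset.sum_image hinj]
    have hsum2 : ∑ m : Fin n,
        dF * dG * ((Finset.univ.erase m).noncommProd w (fun i _ j _ _ => hc i j)) =
        (∑ m : Fin n, (a m * d m - b m * c m)) • P := by
      rw [Finset.sum_congr rfl (fun m _ => key m), Finset.sum_smul]
    calc dF * dG * ω ^ (n - 1)
        = dF * dG * ((n - 1).factorial •
            ∑ T ∈ Finset.powersetCard (n - 1) (Finset.univ : Finset (Fin n)),
              T.noncommProd w (fun i _ j _ _ => hc i j)) := by
          rw [hω', stmt6_sum_pow w hc hsq Finset.univ (n - 1)]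
      _ = (n - 1).factorial • ((∑ m : Fin n, (a m * d m - b m * c m)) • P) := by
          rw [mul_smul_comm, hsum1, Finset.mul_sum, hsum2]
      _ = (((n - 1).factorial : ℝ) * ∑ m : Fin n, (a m * d m - b m * c m)) • P := by
          rw [← Nat.cast_smul_eq_nsmul ℝ, smul_smul]
      _ = (-(1 / (n : ℝ)) * pb * (n.factorial : ℝ)) • P := by
          congr 1
          have hfac : (n.factorial : ℝ) = (n : ℝ) * ((n - 1).factorial : ℝ) := by
            rw [← Nat.cast_mul, Nat.mul_factorial_pred hn.ne']
          rw [hS, hfac]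
          field_simp
      _ = (-(1 / (n : ℝ)) * pb) • ω ^ n := by
          rw [hωn, ← Nat.cast_smul_eq_nsmul ℝ, smul_smul]
  -- Part 2
  have part2 : (ω + t • (dF * dG)) ^ n = (1 - t * pb) • ω ^ n := by
    have hDsq : (t • (dF * dG)) * (t • (dF * dG)) = 0 := by
      rw [smul_mul_smul_comm, ← hvF, ← hvG, stmt6_pair_sq, smul_zero]
    have hcommωD : Commute ω (t • (dF * dG)) := by
      refine Commute.smul_right ?_ t
      rw [hω', ← hvF, ← hvG]
      exact Commute.sum_left _ _ _ (fun i _ =>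
        (stmt6_pair_comm (e i) (f i) _).mul_right (stmt6_pair_comm (e i) (f i) _))
    obtain ⟨m, hnm⟩ : ∃ m, n = m + 1 := ⟨n - 1, (Nat.succ_pred_eq_of_pos hn).symm⟩
    have part1' : dF * dG * ω ^ m = (-(1 / (n : ℝ)) * pb) • ω ^ n := by
      have : n - 1 = m := by omega
      rw [← this]; exact part1
    have hsc : (1 - t * pb : ℝ) = 1 + (n : ℝ) * (t * (-(1 / (n : ℝ)) * pb)) := by
      field_simp; ring
    rw [hnm, stmt6_aux_pow ω (t • (dF * dG)) hcommωD hDsq m, smul_mul_assoc, part1',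
      ← hnm, smul_smul, ← Nat.cast_smul_eq_nsmul ℝ, smul_smul, hsc, add_smul, one_smul]
  refine ⟨part1, part2, fun hlt hne => ?_⟩
  rw [part2]
  exact smul_ne_zero (by nlinarith : (1 - t * pb : ℝ) ≠ 0) hne
end
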